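/- Soundness of the multiplayer partial-information game: if the coalition P_∃ of players controlling existentially quantified trace variables has a joint observation-respecting strategy under which every resulting play of G_{K,φ} is even (the minimal infinitely occurring color is even), then K ⊨ φ. -/

import Mathlib

/-- Syntax of LTL formulas over atomic propositions `α` (with a primitive
`true` constant). -/
inductive LTL (α : Type) where
  | tt : LTL α
  | atom : α → LTL α
  | conj : LTL α → LTL α → LTL α
  | neg : LTL α → LTL α
  | next : LTL α → LTL α
  | untl : LTL α → LTL α → LTL α

/-- Satisfaction of an LTL formula on a trace `t : ℕ → Set α` at position `i`. -/
def LTL.sat {α : Type} (t : ℕ → Set α) : ℕ → LTL α → Prop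
  | _, .tt => True
  | i, .atom a => a ∈ t i
  | i, .conj φ ψ => LTL.sat t i φ ∧ LTL.sat t i ψ
  | i, .neg φ => ¬ LTL.sat t i φ
  | i, .next φ => LTL.sat t (i + 1) φ
  | i, .untl φ ψ =>
      ∃ k, i ≤ k ∧ LTL.sat t k ψ ∧ ∀ j, i ≤ j → j < k → LTL.sat t j φ

/-- Paths of a Kripke structure. -/
def IsKPath {St D : Type} (init : St) (κ : St → D → St) (τ : ℕ → St) : Prop :=
  τ 0 = init ∧ ∀ i, ∃ d : D, τ (i + 1) = κ (τ i) d

/-- The trace set of a Kripke structure. -/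
def KTraces {St D α : Type} (init : St) (κ : St → D → St) (ℓ : St → Set α) :
    Set (ℕ → Set α) :=
  {t | ∃ τ : ℕ → St, IsKPath init κ τ ∧ ∀ i, t i = ℓ (τ i)}

/-- Combine a list of `n` traces (for trace variables `π₁, …, π_n`, in order)
into one trace over variable-indexed atomic propositions `α × Fin n`. -/
def zipTraces {α : Type} (n : ℕ) (ts : List (ℕ → Set α)) : ℕ → Set (α × Fin n) :=
  fun k => {x | x.1 ∈ ts.getD x.2.val (fun _ => (∅ : Set α)) k}

/-- Semantics of a HyperLTL quantifier prefix (`true` = `∃`, `false` = `∀`)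
over a trace set, applied to a body predicate on the quantified traces. -/
def hyperSat {α : Type} (Tr : Set (ℕ → Set α)) :
    List Bool → (List (ℕ → Set α) → Prop) → Prop
  | [], body => body []
  | true :: qs, body => ∃ t ∈ Tr, hyperSat Tr qs fun ts => body (t :: ts)
  | false :: qs, body => ∀ t ∈ Tr, hyperSat Tr qs fun ts => body (t :: ts)

/-- A vertex of the verification game `G_{K,φ}`: states of the `n` system
copies, a state of the deterministic parity automaton `A_ψ`, and the player
whose turn it is. -/
structure GVertex (St Q : Type) (n : ℕ) where
  st : Fin n → St
  aut : Q
  turn : Fin n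

/-- The letter over the indexed alphabet read from the current copy states. -/
def letterOf {St α : Type} {n : ℕ} (ℓ : St → Set α) (s : Fin n → St) :
    Set (α × Fin n) :=
  {x | x.1 ∈ ℓ (s x.2)}

/-- One move of the game: the player to move updates its own copy along the
chosen direction and the turn passes round-robin to the next player; when
player `0` (the first player) moves, a round has just concluded and the DPA
state is additionally updated by reading the indexed labels of the current
copy states. -/
def gStep {St D α Q : Type} {n : ℕ} [NeZero n] (κ : St → D → St)
    (ℓ : St → Set α) (δ : Q → Set (α × Fin n) → Q)
    (v : GVertex St Q n) (d : D) : GVertex St Q n :=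
  if v.turn = 0 then
    ⟨Function.update v.st v.turn (κ (v.st v.turn) d),
      δ v.aut (letterOf ℓ v.st), v.turn + 1⟩
  else
    ⟨Function.update v.st v.turn (κ (v.st v.turn) d), v.aut, v.turn + 1⟩

/-- The initial vertex: all copies in the initial state, the DPA in its
initial state, player `0` to move. -/
def gInit {St Q : Type} {n : ℕ} [NeZero n] (init : St) (q0 : Q) :
    GVertex St Q n :=
  ⟨fun _ => init, q0, 0⟩

/-- `ρ` is the infinite play arising from the global strategy `σ` (one
strategy per player, mapping the history of vertices to a direction). -/
def IsPlay {St D α Q : Type} {n : ℕ} [NeZero n] (init : St) (κ : St → D → St)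
    (ℓ : St → Set α) (δ : Q → Set (α × Fin n) → Q) (q0 : Q)
    (σ : Fin n → List (GVertex St Q n) → D) (ρ : ℕ → GVertex St Q n) : Prop :=
  ρ 0 = gInit init q0 ∧
  ∀ i, ρ (i + 1) =
    gStep κ ℓ δ (ρ i) (σ (ρ i).turn ((List.range (i + 1)).map ρ))

/-- Player `p`'s observation on vertices: the player to move coincides and the
states of all copies `j ≤ p` coincide. -/
def gObs {St Q : Type} {n : ℕ} (p : Fin n) (v v' : GVertex St Q n) : Prop :=
  v.turn = v'.turn ∧ ∀ j : Fin n, j ≤ p → v.st j = v'.st j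

/-- Positionwise lifting of player `p`'s observation to finite plays. -/
def listObs {St Q : Type} {n : ℕ} (p : Fin n)
    (ρ₁ ρ₂ : List (GVertex St Q n)) : Prop :=
  ρ₁.length = ρ₂.length ∧
  ∀ i (h₁ : i < ρ₁.length) (h₂ : i < ρ₂.length),
    gObs p (ρ₁.get ⟨i, h₁⟩) (ρ₂.get ⟨i, h₂⟩)

/-- A strategy respects player `p`'s observations if it chooses the same
direction on indistinguishable histories. -/
def ObsStrategy {St D Q : Type} {n : ℕ} (p : Fin n)
    (σp : List (GVertex St Q n) → D) : Prop :=
  ∀ ρ₁ ρ₂, listObs p ρ₁ ρ₂ → σp ρ₁ = σp ρ₂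

/-- The parity condition on a state sequence `r`: the minimal color occurring
infinitely often is even. -/
def MinInfEven {Q : Type} (c : Q → ℕ) (r : ℕ → Q) : Prop :=
  ∃ m, Even m ∧ {i | c (r i) = m}.Infinite ∧
    ∀ m', {i | c (r i) = m'}.Infinite → m ≤ m'

/-- A play of the game is even iff the traversed DPA states satisfy the
parity condition (vertex colors are the colors of their DPA component). -/
def EvenPlay {St Q : Type} {n : ℕ} (c : Q → ℕ) (ρ : ℕ → GVertex St Q n) :
    Prop :=
  MinInfEven c fun i => (ρ i).aut

/-- The coalition `coal` wins `G_{K,φ}`: its members have observation-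
respecting strategies such that, no matter which strategies the remaining
players use, the resulting play is even. -/
def Wins {St D α Q : Type} {n : ℕ} [NeZero n] (init : St) (κ : St → D → St)
    (ℓ : St → Set α) (δ : Q → Set (α × Fin n) → Q) (q0 : Q) (c : Q → ℕ)
    (coal : Set (Fin n)) : Prop :=
  ∃ σ : Fin n → List (GVertex St Q n) → D,
    (∀ p ∈ coal, ObsStrategy p (σ p)) ∧
    ∀ σ' : Fin n → List (GVertex St Q n) → D,
      (∀ p ∈ coal, σ' p = σ p) →
      ∀ ρ, IsPlay init κ ℓ δ q0 σ' ρ → EvenPlay c ρ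

/-- The run of the DPA `(δ, q0)` on an infinite word `u`. -/
def dpaRun {α Q : Type} (δ : Q → α → Q) (q0 : Q) (u : ℕ → α) : ℕ → Q
  | 0 => q0
  | i + 1 => δ (dpaRun δ q0 u i) (u i)

section GameSoundness

open Fin.NatCast

variable {St D α Q : Type} {n : ℕ} [NeZero n]
variable (init : St) (κ : St → D → St) (ℓ : St → Set α)
variable (δ : Q → Set (α × Fin n) → Q) (q0 : Q)

lemma gStep_st' (v : GVertex St Q n) (d : D) :
    (gStep κ ℓ δ v d).st = Function.update v.st v.turn (κ (v.st v.turn) d) := by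
  unfold gStep; split <;> rfl

lemma gStep_turn' (v : GVertex St Q n) (d : D) :
    (gStep κ ℓ δ v d).turn = v.turn + 1 := by
  unfold gStep; split <;> rfl

lemma gStep_aut' (v : GVertex St Q n) (d : D) :
    (gStep κ ℓ δ v d).aut =
      if v.turn = 0 then δ v.aut (letterOf ℓ v.st) else v.aut := by
  unfold gStep; split <;> simp_all

def playPair (σ' : Fin n → List (GVertex St Q n) → D) :
    ℕ → GVertex St Q n × List (GVertex St Q n)
  | 0 => (gInit init q0, [gInit init q0])
  | i + 1 =>
    (gStep κ ℓ δ (playPair σ' i).1 (σ' (playPair σ' i).1.turn (playPair σ' i).2),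
     (playPair σ' i).2 ++
       [gStep κ ℓ δ (playPair σ' i).1 (σ' (playPair σ' i).1.turn (playPair σ' i).2)])

def playOf (σ' : Fin n → List (GVertex St Q n) → D) (i : ℕ) : GVertex St Q n :=
  (playPair init κ ℓ δ q0 σ' i).1

lemma playOf_zero (σ') : playOf init κ ℓ δ q0 σ' 0 = gInit init q0 := rfl

lemma playPair_snd (σ') : ∀ i, (playPair init κ ℓ δ q0 σ' i).2 =
    (List.range (i + 1)).map (playOf init κ ℓ δ q0 σ') := by
  intro i
  induction i with
  | zero => rfl
  | succ i ih =>
    have h : (playPair init κ ℓ δ q0 σ' (i+1)).2 =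
        (playPair init κ ℓ δ q0 σ' i).2 ++ [playOf init κ ℓ δ q0 σ' (i+1)] := rfl
    rw [h, ih, List.range_succ (n := i + 1), List.map_append]
    rfl

lemma playOf_succ (σ') (i : ℕ) :
    playOf init κ ℓ δ q0 σ' (i + 1) =
      gStep κ ℓ δ (playOf init κ ℓ δ q0 σ' i)
        (σ' (playOf init κ ℓ δ q0 σ' i).turn
          ((List.range (i + 1)).map (playOf init κ ℓ δ q0 σ'))) := by
  show (playPair init κ ℓ δ q0 σ' (i+1)).1 = _
  rw [← playPair_snd]
  rfl

lemma isPlay_playOf (σ') : IsPlay init κ ℓ δ q0 σ' (playOf init κ ℓ δ q0 σ') :=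
  ⟨rfl, fun i => playOf_succ init κ ℓ δ q0 σ' i⟩

lemma playOf_turn (σ') : ∀ i, (playOf init κ ℓ δ q0 σ' i).turn = (i : Fin n) := by
  intro i
  induction i with
  | zero => rfl
  | succ i ih => rw [playOf_succ, gStep_turn', ih, Nat.cast_succ]

lemma cast_val_lem (k j : ℕ) (hj : j < n) : ((k * n + j : ℕ) : Fin n).val = j := by
  rw [Fin.val_natCast, Nat.add_mod, Nat.mul_mod_left, Nat.zero_add,
    Nat.mod_eq_of_lt hj, Nat.mod_eq_of_lt hj]

lemma playOf_st_of_ne (σ') (p : Fin n) (i : ℕ) (h : (i : Fin n) ≠ p) :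
    (playOf init κ ℓ δ q0 σ' (i + 1)).st p = (playOf init κ ℓ δ q0 σ' i).st p := by
  rw [playOf_succ, gStep_st', playOf_turn,
    Function.update_of_ne (fun hc => h hc.symm)]

lemma playOf_st_between (σ') (p : Fin n) (a : ℕ) : ∀ b, a ≤ b →
    (∀ i, a ≤ i → i < b → (i : Fin n) ≠ p) →
    (playOf init κ ℓ δ q0 σ' b).st p = (playOf init κ ℓ δ q0 σ' a).st p := by
  intro b
  induction b with
  | zero => intro h _; rw [Nat.le_zero.mp h]
  | succ b ih =>
    intro hab h
    rcases Nat.eq_or_lt_of_le hab with h1 | h1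
    · rw [h1]
    · have hb : a ≤ b := by omega
      rw [playOf_st_of_ne init κ ℓ δ q0 σ' p b (h b hb (by omega))]
      exact ih hb (fun i hi hib => h i hi (by omega))

lemma playOf_round_step (σ') (p : Fin n) (k : ℕ) :
    (playOf init κ ℓ δ q0 σ' ((k + 1) * n)).st p =
      κ ((playOf init κ ℓ δ q0 σ' (k * n)).st p)
        (σ' p ((List.range (k * n + p.val + 1)).map (playOf init κ ℓ δ q0 σ'))) := by
  have hn : 0 < n := Nat.pos_of_ne_zero (NeZero.ne n)
  have hturn : (playOf init κ ℓ δ q0 σ' (k * n + p.val)).turn = p := by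
    rw [playOf_turn]
    exact Fin.ext (cast_val_lem k p.val p.isLt)
  have h1 : (playOf init κ ℓ δ q0 σ' (k * n + p.val)).st p =
      (playOf init κ ℓ δ q0 σ' (k * n)).st p := by
    apply playOf_st_between
    · omega
    · intro i hi hib
      have hio : i = k * n + (i - k * n) := by omega
      rw [hio]
      intro hc
      have := cast_val_lem (n := n) k (i - k * n) (by omega)
      rw [hc] at this
      omega
  have h2 : (playOf init κ ℓ δ q0 σ' (k * n + p.val + 1)).st p =
      κ ((playOf init κ ℓ δ q0 σ' (k * n)).st p)
        (σ' p ((List.range (k * n + p.val + 1)).map (playOf init κ ℓ δ q0 σ'))) := by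
    rw [playOf_succ, gStep_st', hturn, Function.update_self, h1]
  rw [← h2]
  have hkn : (k + 1) * n = k * n + n := by ring
  have hp := p.isLt
  apply playOf_st_between
  · omega
  · intro i hi hib
    have hio : i = k * n + (i - k * n) := by omega
    have hlt : i - k * n < n := by
      have : (k + 1) * n = k * n + n := by ring
      omega
    rw [hio]
    intro hc
    have := cast_val_lem (n := n) k (i - k * n) hlt
    rw [hc] at this
    omega

lemma isKPath_playTrace (σ') (p : Fin n) :
    IsKPath init κ (fun k => (playOf init κ ℓ δ q0 σ' (k * n)).st p) :=
  ⟨by simp only [Nat.zero_mul]; rfl,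
   fun k => ⟨_, playOf_round_step init κ ℓ δ q0 σ' p k⟩⟩

lemma playOf_aut_between (σ') (a : ℕ) : ∀ b, a ≤ b →
    (∀ i, a ≤ i → i < b → (i : Fin n) ≠ 0) →
    (playOf init κ ℓ δ q0 σ' b).aut = (playOf init κ ℓ δ q0 σ' a).aut := by
  intro b
  induction b with
  | zero => intro h _; rw [Nat.le_zero.mp h]
  | succ b ih =>
    intro hab h
    rcases Nat.eq_or_lt_of_le hab with h1 | h1
    · rw [h1]
    · have hb : a ≤ b := by omega
      rw [playOf_succ, gStep_aut', playOf_turn, if_neg (h b hb (by omega))]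
      exact ih hb (fun i hi hib => h i hi (by omega))

lemma cast_ne_zero_of (i : ℕ) (h : ¬ (n ∣ i)) : (i : Fin n) ≠ 0 := by
  intro hc
  have h0 : ((i : Fin n)).val = 0 := by rw [hc]; rfl
  rw [Fin.val_natCast] at h0
  exact h (Nat.dvd_of_mod_eq_zero h0)

lemma playOf_round_aut (σ') (k : ℕ) :
    (playOf init κ ℓ δ q0 σ' ((k + 1) * n)).aut =
      δ ((playOf init κ ℓ δ q0 σ' (k * n)).aut)
        (letterOf ℓ ((playOf init κ ℓ δ q0 σ' (k * n)).st)) := by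
  have hn : 0 < n := Nat.pos_of_ne_zero (NeZero.ne n)
  have h0 : ((k * n : ℕ) : Fin n) = 0 := by
    apply Fin.ext
    rw [Fin.val_natCast, Nat.mul_mod_left]
    rfl
  have h1 : (playOf init κ ℓ δ q0 σ' (k * n + 1)).aut =
      δ ((playOf init κ ℓ δ q0 σ' (k * n)).aut)
        (letterOf ℓ ((playOf init κ ℓ δ q0 σ' (k * n)).st)) := by
    rw [playOf_succ, gStep_aut', playOf_turn, if_pos h0]
  rw [← h1]
  have hkn : (k + 1) * n = k * n + n := by ring
  apply playOf_aut_between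
  · omega
  · intro i hi hib
    apply cast_ne_zero_of
    intro ⟨c, hc⟩
    have : (k + 1) * n = k * n + n := by ring
    have hck : k < c := by nlinarith
    have : k + 1 ≤ c := hck
    nlinarith

lemma playOf_aut_ge (σ') (k j : ℕ) (h1 : 1 ≤ j) (h2 : j ≤ n) :
    (playOf init κ ℓ δ q0 σ' (k * n + j)).aut =
      (playOf init κ ℓ δ q0 σ' ((k + 1) * n)).aut := by
  have hkn : (k + 1) * n = k * n + n := by ring
  rw [hkn]
  symm
  apply playOf_aut_between
  · omega
  · intro i hi hib
    apply cast_ne_zero_of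
    intro ⟨c, hc⟩
    have hck : k < c := by nlinarith
    have : k + 1 ≤ c := hck
    nlinarith

lemma playOf_dpaRun (σ') : ∀ k, (playOf init κ ℓ δ q0 σ' (k * n)).aut =
    dpaRun δ q0 (fun k => letterOf ℓ ((playOf init κ ℓ δ q0 σ' (k * n)).st)) k := by
  intro k
  induction k with
  | zero => rw [Nat.zero_mul]; rfl
  | succ k ih => rw [playOf_round_aut, ih]; rfl

lemma evenPlay_transfer (σ') (c : Q → ℕ)
    (hE : EvenPlay c (playOf init κ ℓ δ q0 σ')) :
    MinInfEven c (fun k => (playOf init κ ℓ δ q0 σ' (k * n)).aut) := by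
  have hn : 0 < n := Nat.pos_of_ne_zero (NeZero.ne n)
  obtain ⟨m, hm, hinf, hmin⟩ := hE
  refine ⟨m, hm, ?_, ?_⟩
  · by_contra hfin
    rw [Set.not_infinite] at hfin
    obtain ⟨N, hN⟩ := hfin.bddAbove
    apply hinf
    apply Set.Finite.subset (Set.finite_Iic ((N + 1) * n))
    intro i hi
    simp only [Set.mem_setOf_eq] at hi
    simp only [Set.mem_Iic]
    by_contra hgt
    push_neg at hgt
    have hi1 : 1 ≤ i := by nlinarith
    set k := (i - 1) / n with hk
    set j := (i - 1) % n + 1 with hj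
    have hdm : (i - 1) / n * n + (i - 1) % n = i - 1 := Nat.div_add_mod' (i - 1) n
    have hjn : j ≤ n := by
      have := Nat.mod_lt (i - 1) hn
      omega
    have hieq : i = k * n + j := by
      rw [hk, hj]
      omega
    rw [hieq, playOf_aut_ge init κ ℓ δ q0 σ' k j (by omega) hjn] at hi
    have hkN : k + 1 ≤ N := hN hi
    have h1 : (k + 1) * n ≤ N * n := Nat.mul_le_mul_right n hkN
    have h2 : (k + 1) * n = k * n + n := by ring
    have h3 : N * n ≤ (N + 1) * n := Nat.mul_le_mul_right n (by omega)
    omega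
  · intro m' hinf'
    apply hmin
    have hsub : (fun k => k * n) '' {k | c ((playOf init κ ℓ δ q0 σ' (k * n)).aut) = m'}
        ⊆ {i | c ((playOf init κ ℓ δ q0 σ' i).aut) = m'} := by
      rintro _ ⟨k, hk, rfl⟩
      exact hk
    refine Set.Infinite.mono hsub ?_
    apply Set.Infinite.image ?_ hinf'
    exact Set.injOn_of_injective (fun a b hab => Nat.eq_of_mul_eq_mul_right hn hab)

omit [NeZero n] in
lemma gObs_mono {p q : Fin n} (h : q ≤ p) {v v' : GVertex St Q n} :
    gObs p v v' → gObs q v v' :=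
  fun ⟨h1, h2⟩ => ⟨h1, fun j hj => h2 j (le_trans hj h)⟩

lemma playOf_gObs (σ₁ σ₂ : Fin n → List (GVertex St Q n) → D) (p : Fin n)
    (hag : ∀ q : Fin n, q ≤ p → σ₁ q = σ₂ q)
    (hobs : ∀ q : Fin n, q ≤ p → ObsStrategy q (σ₁ q)) :
    ∀ i, gObs p (playOf init κ ℓ δ q0 σ₁ i) (playOf init κ ℓ δ q0 σ₂ i) := by
  intro i
  induction i using Nat.strong_induction_on with
  | _ i ih =>
    match i with
    | 0 => exact ⟨rfl, fun _ _ => rfl⟩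
    | i + 1 =>
      refine ⟨by rw [playOf_turn, playOf_turn], ?_⟩
      intro j hj
      rw [playOf_succ, playOf_succ, gStep_st', gStep_st', playOf_turn, playOf_turn]
      by_cases hc : (i : Fin n) ≤ p
      · have hd : σ₁ (i : Fin n) ((List.range (i + 1)).map (playOf init κ ℓ δ q0 σ₁))
            = σ₂ (i : Fin n) ((List.range (i + 1)).map (playOf init κ ℓ δ q0 σ₂)) := by
          rw [← hag _ hc]
          apply hobs _ hc
          constructor
          · simp
          · intro idx h1 h2
            simp only [List.length_map, List.length_range] at h1
            have hg : ∀ σ' (hh : idx < (((List.range (i + 1)).map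
                (playOf init κ ℓ δ q0 σ')).length)),
                ((List.range (i + 1)).map (playOf init κ ℓ δ q0 σ')).get ⟨idx, hh⟩
                  = playOf init κ ℓ δ q0 σ' idx := by
              intro σ' hh
              simp [List.getElem_map]
            rw [hg σ₁, hg σ₂]
            exact gObs_mono hc (ih idx (by omega))
        rw [hd]
        have hsti := (ih i (by omega)).2
        by_cases hji : j = (i : Fin n)
        · subst hji
          rw [Function.update_self, Function.update_self, hsti _ hj]
        · rw [Function.update_of_ne hji, Function.update_of_ne hji]
          exact hsti j hj
      · have hji : j ≠ (i : Fin n) := fun h => hc (h ▸ hj)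
        rw [Function.update_of_ne hji, Function.update_of_ne hji]
        exact (ih i (by omega)).2 j hj

lemma playOf_follow (σ' : Fin n → List (GVertex St Q n) → D) (p : Fin n)
    (τ : ℕ → St) (d : ℕ → D)
    (h0 : τ 0 = init) (hstep : ∀ k, τ (k + 1) = κ (τ k) (d k))
    (hσ : ∀ h : List (GVertex St Q n), σ' p h = d ((h.length - 1 - p.val) / n)) :
    ∀ k, (playOf init κ ℓ δ q0 σ' (k * n)).st p = τ k := by
  have hn : 0 < n := Nat.pos_of_ne_zero (NeZero.ne n)
  intro k
  induction k with
  | zero => simp only [Nat.zero_mul]; rw [h0]; rfl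
  | succ k ih =>
    rw [playOf_round_step, hσ, ih, hstep]
    congr 1
    simp only [List.length_map, List.length_range]
    have : k * n + p.val + 1 - 1 - p.val = k * n := by omega
    rw [this, Nat.mul_div_cancel k hn]

lemma hyperSat_congr {β : Type} (Tr : Set (ℕ → Set β)) :
    ∀ (L : List Bool) (b₁ b₂ : List (ℕ → Set β) → Prop),
      (∀ ts, b₁ ts ↔ b₂ ts) → hyperSat Tr L b₁ → hyperSat Tr L b₂ := by
  intro L
  induction L with
  | nil => intro b₁ b₂ h hs; exact (h []).1 hs
  | cons q L ihL =>
    cases q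
    · intro b₁ b₂ h hs t ht
      exact ihL _ _ (fun ts => h (t :: ts)) (hs t ht)
    · rintro b₁ b₂ h ⟨t, ht, hs⟩
      exact ⟨t, ht, ihL _ _ (fun ts => h (t :: ts)) hs⟩

omit [NeZero n] in
lemma getD_append_lt' {β : Type _} (l m : List β) (dflt : β) (j : ℕ) (h : j < l.length) :
    (l ++ m).getD j dflt = l.getD j dflt := by
  rw [List.getD_eq_getElem _ _ (by simp; omega), List.getD_eq_getElem _ _ h]
  exact List.getElem_append_left _

omit [NeZero n] in
lemma getD_append_eq' {β : Type _} (l : List β) (x : β) (dflt : β) (j : ℕ)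
    (h : j = l.length) : (l ++ [x]).getD j dflt = x := by
  subst h; simp [List.getD_eq_getElem]

lemma aux_main (c : Q → ℕ) (ψ : LTL (α × Fin n))
    (hrec : ∀ u : ℕ → Set (α × Fin n), MinInfEven c (dpaRun δ q0 u) ↔ LTL.sat u 0 ψ)
    (Qv : Fin n → Bool) (σ : Fin n → List (GVertex St Q n) → D)
    (hσobs : ∀ p : Fin n, Qv p = true → ObsStrategy p (σ p))
    (hwinall : ∀ σ' : Fin n → List (GVertex St Q n) → D,
      (∀ p : Fin n, Qv p = true → σ' p = σ p) →
      ∀ ρ, IsPlay init κ ℓ δ q0 σ' ρ → EvenPlay c ρ) :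
    ∀ (fuel m : ℕ), m + fuel = n →
    ∀ (σ' : Fin n → List (GVertex St Q n) → D) (pre : List (ℕ → Set α)),
      (∀ q, ObsStrategy q (σ' q)) →
      (∀ p : Fin n, Qv p = true → σ' p = σ p) →
      pre.length = m →
      (∀ j : Fin n, j.val < m →
        pre.getD j.val (fun _ => ∅) =
          fun k => ℓ ((playOf init κ ℓ δ q0 σ' (k * n)).st j)) →
      hyperSat (KTraces init κ ℓ) ((List.ofFn Qv).drop m)
        (fun ts => LTL.sat (zipTraces n (pre ++ ts)) 0 ψ) := by
  intro fuel
  induction fuel with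
  | zero =>
    intro m hmn σ' pre hobs' hco' hlen hpre
    have hm : m = n := by omega
    have hnil : (List.ofFn Qv).drop m = [] := by
      refine List.drop_eq_nil_of_le ?_
      rw [List.length_ofFn]
      omega
    rw [hnil]
    show LTL.sat (zipTraces n (pre ++ [])) 0 ψ
    rw [List.append_nil]
    have hzip : zipTraces n pre =
        fun k => letterOf ℓ ((playOf init κ ℓ δ q0 σ' (k * n)).st) := by
      funext k
      ext x
      show x.1 ∈ pre.getD x.2.val (fun _ => ∅) k ↔
        x.1 ∈ ℓ ((playOf init κ ℓ δ q0 σ' (k * n)).st x.2)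
      rw [hpre x.2 (by rw [hm]; exact x.2.isLt)]
    rw [← hrec, hzip]
    have hE := evenPlay_transfer init κ ℓ δ q0 σ' c
      (hwinall σ' hco' _ (isPlay_playOf init κ ℓ δ q0 σ'))
    have hd : dpaRun δ q0
        (fun k => letterOf ℓ ((playOf init κ ℓ δ q0 σ' (k * n)).st)) =
        fun k => (playOf init κ ℓ δ q0 σ' (k * n)).aut :=
      funext fun k => (playOf_dpaRun init κ ℓ δ q0 σ' k).symm
    rw [hd]
    exact hE
  | succ fuel IH =>
    intro m hmn σ' pre hobs' hco' hlen hpre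
    have hmn' : m < n := by omega
    have hdrop : (List.ofFn Qv).drop m =
        Qv ⟨m, hmn'⟩ :: (List.ofFn Qv).drop (m + 1) := by
      rw [List.drop_eq_getElem_cons (by simpa using hmn')]
      congr 1
      simp
    rw [hdrop]
    set pm : Fin n := ⟨m, hmn'⟩ with hpm
    cases hQ : Qv pm with
    | false =>
      intro t ht
      obtain ⟨τ, ⟨hτ0, hτs⟩, htl⟩ := ht
      choose dd hdd using hτs
      set σ'' := Function.update σ' pm
        (fun h : List (GVertex St Q n) => dd ((h.length - 1 - pm.val) / n)) with hσ''
      have h2obs : ∀ q, ObsStrategy q (σ'' q) := by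
        intro q
        by_cases hq : q = pm
        · subst hq
          rw [hσ'', Function.update_self]
          intro ρ₁ ρ₂ hob
          show dd ((ρ₁.length - 1 - pm.val) / n) = dd ((ρ₂.length - 1 - pm.val) / n)
          rw [hob.1]
        · rw [hσ'', Function.update_of_ne hq]
          exact hobs' q
      have h2co : ∀ p : Fin n, Qv p = true → σ'' p = σ p := by
        intro p hp
        have hppm : p ≠ pm := by
          intro h; rw [h, hQ] at hp; exact Bool.noConfusion hp
        rw [hσ'', Function.update_of_ne hppm]
        exact hco' p hp
      have hlow : ∀ q : Fin n, q.val < m → ∀ k,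
          (playOf init κ ℓ δ q0 σ'' (k * n)).st q =
          (playOf init κ ℓ δ q0 σ' (k * n)).st q := by
        intro q hq k
        have hgo := playOf_gObs init κ ℓ δ q0 σ'' σ' q
          (fun r hr => by
            apply Function.update_of_ne
            intro hc
            have hrq : r.val ≤ q.val := hr
            have : r.val = m := by rw [hc]
            omega)
          (fun r _ => h2obs r) (k * n)
        exact hgo.2 q le_rfl
      have hfol : ∀ k, (playOf init κ ℓ δ q0 σ'' (k * n)).st pm = τ k :=
        playOf_follow init κ ℓ δ q0 σ'' pm τ dd hτ0 hdd
          (fun h => by rw [hσ'', Function.update_self])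
      have hpre2 : ∀ j : Fin n, j.val < m + 1 →
          (pre ++ [t]).getD j.val (fun _ => ∅) =
            fun k => ℓ ((playOf init κ ℓ δ q0 σ'' (k * n)).st j) := by
        intro j hj
        rcases Nat.lt_or_ge j.val m with hjm | hjm
        · rw [getD_append_lt' pre [t] _ j.val (by rw [hlen]; exact hjm), hpre j hjm]
          funext k
          rw [hlow j hjm k]
        · have hjm' : j.val = m := by omega
          have hjpm : j = pm := Fin.ext hjm'
          rw [getD_append_eq' pre t _ j.val (by rw [hlen]; exact hjm'), hjpm]
          funext k
          rw [htl k, hfol k]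
      have hmain := IH (m + 1) (by omega) σ'' (pre ++ [t]) h2obs h2co
        (by simp [hlen]) hpre2
      refine hyperSat_congr _ _ _ _ ?_ hmain
      intro ts
      rw [List.append_assoc]
      exact Iff.rfl
    | true =>
      refine ⟨fun k => ℓ ((playOf init κ ℓ δ q0 σ' (k * n)).st pm),
        ⟨_, isKPath_playTrace init κ ℓ δ q0 σ' pm, fun i => rfl⟩, ?_⟩
      have hpre2 : ∀ j : Fin n, j.val < m + 1 →
          (pre ++ [fun k => ℓ ((playOf init κ ℓ δ q0 σ' (k * n)).st pm)]).getD
              j.val (fun _ => ∅) =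
            fun k => ℓ ((playOf init κ ℓ δ q0 σ' (k * n)).st j) := by
        intro j hj
        rcases Nat.lt_or_ge j.val m with hjm | hjm
        · rw [getD_append_lt' _ _ _ j.val (by rw [hlen]; exact hjm), hpre j hjm]
        · have hjm' : j.val = m := by omega
          have hjpm : j = pm := Fin.ext hjm'
          rw [getD_append_eq' _ _ _ j.val (by rw [hlen]; exact hjm'), hjpm]
      have hmain := IH (m + 1) (by omega) σ' _ hobs' hco' (by simp [hlen]) hpre2
      refine hyperSat_congr _ _ _ _ ?_ hmain
      intro ts
      rw [List.append_assoc]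
      exact Iff.rfl

end GameSoundness

/-- Soundness of the multiplayer partial-information game:
let `φ = Q₁π₁…Q_nπ_n.ψ` (quantifiers given by `Qv`, `true` = `∃`) and let the
DPA `(δ, q0, c)` recognize the LTL body `ψ` over indexed atomic propositions.
If the coalition `P_∃ = {p | Qv p = true}` of players controlling the
existentially quantified copies wins `G_{K,φ}`, then `K ⊨ φ`. -/
theorem game_soundness {St D α Q : Type} {n : ℕ} [NeZero n]
    (init : St) (κ : St → D → St) (ℓ : St → Set α)
    (q0 : Q) (δ : Q → Set (α × Fin n) → Q) (c : Q → ℕ)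
    (ψ : LTL (α × Fin n))
    (hrec : ∀ u : ℕ → Set (α × Fin n),
      MinInfEven c (dpaRun δ q0 u) ↔ LTL.sat u 0 ψ)
    (Qv : Fin n → Bool)
    (hwin : Wins init κ ℓ δ q0 c {p | Qv p = true}) :
    hyperSat (KTraces init κ ℓ) (List.ofFn Qv)
      (fun ts => LTL.sat (zipTraces n ts) 0 ψ) := by
  obtain ⟨σ, hσobs, hwinall⟩ := hwin
  have hn : 0 < n := Nat.pos_of_ne_zero (NeZero.ne n)
  set d0 : D := σ ⟨0, hn⟩ [] with hd0
  set σ0 : Fin n → List (GVertex St Q n) → D :=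
    fun q => if Qv q = true then σ q else fun _ => d0 with hσ0
  have h0obs : ∀ q, ObsStrategy q (σ0 q) := by
    intro q
    by_cases hq : Qv q = true
    · simp only [hσ0, if_pos hq]
      exact hσobs q hq
    · simp only [hσ0, if_neg hq]
      intro _ _ _
      rfl
  have h0co : ∀ p : Fin n, Qv p = true → σ0 p = σ p := by
    intro p hp
    simp only [hσ0, if_pos hp]
  have hres := aux_main init κ ℓ δ q0 c ψ hrec Qv σ
    (fun p hp => hσobs p hp) (fun σ' h => hwinall σ' h) n 0 (by omega)
    σ0 [] h0obs h0co rfl (fun j hj => absurd hj (by omega))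
  exact hyperSat_congr _ _ _ _ (fun ts => Iff.rfl) hres
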